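/- Let a, b, c, d ∈ ℂ be nonzero with a·d ≠ b·c. Define L : ℂ² → ℂ² by L(e₁) = f₁ and L(e₂) = (a·d/(b·c))·f₂ (identifying the second tensor factor's basis f₁, f₂ with a basis of ℂ²). Then the set of nonzero simple tensors in span{ e₁ ⊗ f₁, e₂ ⊗ f₂, (a·e₁ + b·e₂) ⊗ (c·f₁ + d·f₂) } ⊆ ℂ² ⊗ ℂ² is exactly { γ · (ψ ⊗ L(ψ)) : ψ ∈ ℂ², ψ ≠ 0, γ ∈ ℂ, γ ≠ 0 }. -/

import Mathlib

open TensorProduct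

/-- The coefficient functional `u ⊗ v ↦ u i * v j`. -/
noncomputable def coefFn (i j : Fin 2) :
    (Fin 2 → ℂ) ⊗[ℂ] (Fin 2 → ℂ) →ₗ[ℂ] ℂ :=
  TensorProduct.lift (LinearMap.mk₂ ℂ (fun u v => u i * v j)
    (by intros; simp [add_mul]) (by intros; simp; ring)
    (by intros; simp [mul_add]) (by intros; simp; ring))

@[simp] lemma coefFn_tmul (i j : Fin 2) (u v : Fin 2 → ℂ) :
    coefFn i j (u ⊗ₜ[ℂ] v) = u i * v j := rfl

lemma fun2_ext {x y : Fin 2 → ℂ} (h0 : x 0 = y 0) (h1 : x 1 = y 1) : x = y := by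
  funext i
  fin_cases i
  · exact h0
  · exact h1

set_option maxHeartbeats 1600000 in
theorem stmt_12 (a b c d : ℂ)
    (ha : a ≠ 0) (hb : b ≠ 0) (hc : c ≠ 0) (hd : d ≠ 0)
    (habcd : a * d ≠ b * c)
    (e : Fin 2 → (Fin 2 → ℂ)) (f : Fin 2 → (Fin 2 → ℂ))
    (he : ∀ i, e i = Pi.single i 1) (hf : ∀ i, f i = Pi.single i 1)
    (L : (Fin 2 → ℂ) →ₗ[ℂ] (Fin 2 → ℂ))
    (hL1 : L (e 0) = f 0) (hL2 : L (e 1) = (a * d / (b * c)) • f 1) :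
    {t : (Fin 2 → ℂ) ⊗[ℂ] (Fin 2 → ℂ) |
        t ∈ Submodule.span ℂ
          {e 0 ⊗ₜ[ℂ] f 0, e 1 ⊗ₜ[ℂ] f 1,
            (a • e 0 + b • e 1) ⊗ₜ[ℂ] (c • f 0 + d • f 1)} ∧
        t ≠ 0 ∧ (∃ (x y : Fin 2 → ℂ), t = x ⊗ₜ[ℂ] y)}
    = {t | ∃ (ψ : Fin 2 → ℂ) (γ : ℂ), ψ ≠ 0 ∧ γ ≠ 0 ∧ t = γ • (ψ ⊗ₜ[ℂ] L ψ)} := by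
  have hbc : b * c ≠ 0 := mul_ne_zero hb hc
  have had : a * d ≠ 0 := mul_ne_zero ha hd
  have hratio : a * d / (b * c) ≠ 0 := div_ne_zero had hbc
  -- values of the basis vectors
  have he00 : e 0 0 = 1 := by simp [he]
  have he01 : e 0 1 = 0 := by simp [he]
  have he10 : e 1 0 = 0 := by simp [he]
  have he11 : e 1 1 = 1 := by simp [he]
  have hf00 : f 0 0 = 1 := by simp [hf]
  have hf01 : f 0 1 = 0 := by simp [hf]
  have hf10 : f 1 0 = 0 := by simp [hf]
  have hf11 : f 1 1 = 1 := by simp [hf]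
  -- decomposition of an arbitrary vector
  have hdecomp : ∀ x : Fin 2 → ℂ, x = x 0 • e 0 + x 1 • e 1 := fun x =>
    fun2_ext (by simp [he00, he10]) (by simp [he01, he11])
  -- value of L on an arbitrary vector
  have hLval : ∀ x : Fin 2 → ℂ,
      L x = x 0 • f 0 + (x 1 * (a * d / (b * c))) • f 1 := by
    intro x
    conv_lhs => rw [hdecomp x]
    rw [map_add, map_smul, map_smul, hL1, hL2, smul_smul]
  have hL0 : ∀ x : Fin 2 → ℂ, L x 0 = x 0 := by
    intro x; rw [hLval x]; simp [hf00, hf10]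
  have hL1' : ∀ x : Fin 2 → ℂ, L x 1 = x 1 * (a * d / (b * c)) := by
    intro x; rw [hLval x]; simp [hf01, hf11]
  -- the defining functional of the span
  set φ : (Fin 2 → ℂ) ⊗[ℂ] (Fin 2 → ℂ) →ₗ[ℂ] ℂ :=
    (a * d) • coefFn 1 0 - (b * c) • coefFn 0 1 with hφ
  have hφt : ∀ u v : Fin 2 → ℂ,
      φ (u ⊗ₜ[ℂ] v) = a * d * (u 1 * v 0) - b * c * (u 0 * v 1) := by
    intro u v; simp [hφ]
  have hspan_le : Submodule.span ℂ
      {e 0 ⊗ₜ[ℂ] f 0, e 1 ⊗ₜ[ℂ] f 1,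
        (a • e 0 + b • e 1) ⊗ₜ[ℂ] (c • f 0 + d • f 1)} ≤ LinearMap.ker φ := by
    rw [Submodule.span_le]
    rintro t (rfl | rfl | rfl) <;>
      simp only [SetLike.mem_coe, LinearMap.mem_ker, hφt] <;>
      simp [he00, he01, he10, he11, hf00, hf01, hf10, hf11] <;> ring
  ext t
  simp only [Set.mem_setOf_eq]
  constructor
  · rintro ⟨hmem, hne, x, y, rfl⟩
    have hcond : a * d * (x 1 * y 0) = b * c * (x 0 * y 1) := by
      have := hspan_le hmem
      rw [LinearMap.mem_ker, hφt] at this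
      exact sub_eq_zero.mp this
    have hx : x ≠ 0 := by rintro rfl; exact hne (zero_tmul _ y)
    have hy : y ≠ 0 := by rintro rfl; exact hne (tmul_zero _ x)
    by_cases hx0 : x 0 = 0
    · -- then x 1 ≠ 0, y 0 = 0, y 1 ≠ 0
      have hx1 : x 1 ≠ 0 := by
        intro h1; exact hx (fun2_ext hx0 h1)
      have hy0 : y 0 = 0 := by
        have h2 : a * d * (x 1 * y 0) = 0 := by rw [hcond, hx0]; ring
        simpa [mul_eq_zero, ha, hd, hx1] using h2
      have hy1 : y 1 ≠ 0 := by
        intro h1; exact hy (fun2_ext hy0 h1)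
      refine ⟨e 1, x 1 * y 1 * (b * c) / (a * d), ?_, ?_, ?_⟩
      · intro h
        have := congrFun h 1
        rw [he11] at this
        simp at this
      · exact div_ne_zero (mul_ne_zero (mul_ne_zero hx1 hy1) hbc) had
      · have hx' : x = x 1 • e 1 :=
          fun2_ext (by simp [hx0, he10]) (by simp [he11])
        have hy' : y = y 1 • f 1 :=
          fun2_ext (by simp [hy0, hf10]) (by simp [hf11])
        rw [hL2]
        conv_lhs => rw [hx', hy']
        simp only [smul_tmul, tmul_smul, smul_smul]
        congr 1
        field_simp
    · -- x 0 ≠ 0 : then y 0 ≠ 0 and take ψ = x, γ = y 0 / x 0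
      have hy0 : y 0 ≠ 0 := by
        intro hy0
        have hy1 : y 1 = 0 := by
          have h2 : b * c * (x 0 * y 1) = 0 := by rw [← hcond, hy0]; ring
          simpa [mul_eq_zero, hb, hc, hx0] using h2
        exact hy (fun2_ext hy0 hy1)
      refine ⟨x, y 0 / x 0, hx, div_ne_zero hy0 hx0, ?_⟩
      have hyLx : y = (y 0 / x 0) • L x := by
        refine fun2_ext ?_ ?_
        · rw [Pi.smul_apply, hL0, smul_eq_mul]
          field_simp
        · rw [Pi.smul_apply, hL1', smul_eq_mul]
          field_simp
          linear_combination -hcond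
      rw [← tmul_smul, ← hyLx]
  · rintro ⟨ψ, γ, hψ, hγ, rfl⟩
    refine ⟨?_, ?_, ψ, γ • L ψ, (tmul_smul γ ψ (L ψ)).symm⟩
    · -- membership in the span
      have hsplit : ψ ⊗ₜ[ℂ] L ψ = (ψ 0 • e 0 + ψ 1 • e 1) ⊗ₜ[ℂ]
          (ψ 0 • f 0 + (ψ 1 * (a * d / (b * c))) • f 1) := by
        rw [← hLval ψ, ← hdecomp ψ]
      have key : γ • (ψ ⊗ₜ[ℂ] L ψ)
          = (γ * (ψ 0 ^ 2 - a * ψ 0 * ψ 1 / b)) • (e 0 ⊗ₜ[ℂ] f 0)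
          + (γ * (a * d * ψ 1 ^ 2 - b * d * ψ 0 * ψ 1) / (b * c)) • (e 1 ⊗ₜ[ℂ] f 1)
          + (γ * ψ 0 * ψ 1 / (b * c)) •
              ((a • e 0 + b • e 1) ⊗ₜ[ℂ] (c • f 0 + d • f 1)) := by
        rw [hsplit]
        simp only [tmul_add, add_tmul, smul_tmul, tmul_smul, smul_smul,
          smul_add]
        match_scalars <;> field_simp <;> ring
      rw [key]
      refine Submodule.add_mem _ (Submodule.add_mem _ ?_ ?_) ?_
      · exact Submodule.smul_mem _ _
          (Submodule.subset_span (Set.mem_insert _ _))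
      · exact Submodule.smul_mem _ _
          (Submodule.subset_span (Set.mem_insert_of_mem _ (Set.mem_insert _ _)))
      · exact Submodule.smul_mem _ _
          (Submodule.subset_span
            (Set.mem_insert_of_mem _ (Set.mem_insert_of_mem _ rfl)))
    · -- nonzero
      intro h0
      have hψcase : ψ 0 ≠ 0 ∨ ψ 1 ≠ 0 := by
        by_contra hcon
        push_neg at hcon
        exact hψ (fun2_ext hcon.1 hcon.2)
      rcases hψcase with h | h
      · have h1 := congrArg (coefFn 0 0) h0
        rw [map_smul, map_zero, coefFn_tmul, hL0] at h1
        simpa [mul_eq_zero, hγ, h] using h1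
      · have h1 := congrArg (coefFn 1 1) h0
        rw [map_smul, map_zero, coefFn_tmul, hL1'] at h1
        simpa [mul_eq_zero, hγ, h, hratio] using h1
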